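/- Let u, v, s, t ∈ ℝ^K with all of u, s having the same relative order as a vector h with distinct entries, and v, t having the same relative order as -h, and suppose v is a permutation of u and t is a permutation of s (as multisets). Then u^T s = v^T t. -/
import Mathlib


/-- `u` has the same relative order as `v`. -/
def SameRelOrder {K : ℕ} (u v : Fin K → ℝ) : Prop :=
  ∀ i j : Fin K, u i ≤ u j ↔ v i ≤ v j

/-- Two monotone tuples that are rearrangements of each other are equal. -/
lemma mono_perm_eq {K : ℕ} {a b : Fin K → ℝ} (ha : Monotone a) (hb : Monotone b)
    (σ : Equiv.Perm (Fin K)) (hab : a = b ∘ σ) : a = b := by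
  have h1 : b ∘ σ = b ∘ Tuple.sort b :=
    Tuple.comp_sort_eq_comp_iff_monotone.mpr (hab ▸ ha)
  have h2 : b ∘ (1 : Equiv.Perm (Fin K)) = b ∘ Tuple.sort b :=
    Tuple.comp_sort_eq_comp_iff_monotone.mpr (by simpa using hb)
  simp only [Equiv.Perm.coe_one, Function.comp_id] at h2
  rw [hab, h1, ← h2]

/-- If u and s have the same relative order as h (with distinct entries),
v and t have the same relative order as -h, v is a permutation of u and t is
a permutation of s, then uᵀs = vᵀt. -/
theorem stmt_10 (K : ℕ) (h u v s t : Fin K → ℝ) (hinj : Function.Injective h)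
    (hu : SameRelOrder u h) (hs : SameRelOrder s h)
    (hv : SameRelOrder v (fun i => -h i)) (ht : SameRelOrder t (fun i => -h i))
    (hvu : ∃ σ : Equiv.Perm (Fin K), ∀ i, v i = u (σ i))
    (hts : ∃ ρ : Equiv.Perm (Fin K), ∀ i, t i = s (ρ i)) :
    ∑ i : Fin K, u i * s i = ∑ i : Fin K, v i * t i := by
  obtain ⟨σ, hσ⟩ := hvu
  obtain ⟨ρ, hρ⟩ := hts
  set π := Tuple.sort h with hπ
  set π' := Tuple.sort (fun i => -h i) with hπ'
  have hmono : Monotone (h ∘ π) := Tuple.monotone_sort h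
  have hmono' : Monotone ((fun i => -h i) ∘ π') := Tuple.monotone_sort _
  have hu' : Monotone fun i => u (π i) := fun i j hij => (hu _ _).mpr (hmono hij)
  have hs' : Monotone fun i => s (π i) := fun i j hij => (hs _ _).mpr (hmono hij)
  have hv' : Monotone fun i => v (π' i) := fun i j hij => (hv _ _).mpr (hmono' hij)
  have ht' : Monotone fun i => t (π' i) := fun i j hij => (ht _ _).mpr (hmono' hij)
  have hvueq : (fun i => v (π' i)) = (fun i => u (π i)) := by
    apply mono_perm_eq hv' hu' (π⁻¹ * σ * π')
    funext i
    simp [Function.comp, Equiv.Perm.mul_apply, hσ]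
  have htseq : (fun i => t (π' i)) = (fun i => s (π i)) := by
    apply mono_perm_eq ht' hs' (π⁻¹ * ρ * π')
    funext i
    simp [Function.comp, Equiv.Perm.mul_apply, hρ]
  have h1 : ∑ i : Fin K, u i * s i = ∑ i : Fin K, u (π i) * s (π i) :=
    (Equiv.sum_comp π (fun i => u i * s i)).symm
  have h2 : ∑ i : Fin K, v i * t i = ∑ i : Fin K, v (π' i) * t (π' i) :=
    (Equiv.sum_comp π' (fun i => v i * t i)).symm
  rw [h1, h2]
  refine Finset.sum_congr rfl fun i _ => ?_
  rw [congrFun hvueq i, congrFun htseq i]
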